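/- Let V be a finite-dimensional real inner product space, W a subspace of V, and μ, ν, λ Borel probability measures on V with μ = ν * λ. If μ is concentrated on W (μ(W)=1), then there exist probability measures ν₁, λ₁ concentrated on W and a vector h ∈ W⊥ such that ν = ν₁ * δ(h) and λ = λ₁ * δ(−h). -/

import Mathlib

open MeasureTheory
open scoped MeasureTheory RealInnerProductSpace

lemma conv_dirac_eq_map {V : Type*} [NormedAddCommGroup V] [SecondCountableTopology V]
    [MeasurableSpace V] [BorelSpace V]
    (ρ : Measure V) [SFinite ρ] (h : V) :
    ρ ∗ Measure.dirac h = ρ.map (· + h) := by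
  show Measure.map (fun x : V × V => x.1 + x.2) (ρ.prod (Measure.dirac h)) = _
  rw [Measure.prod_dirac, Measure.map_map measurable_add (by fun_prop)]
  rfl

/-- **Lemma 2.** If `μ = ν ∗ λ` is concentrated on a subspace `W`, then
`ν = ν₁ ∗ δ(h)` and `λ = λ₁ ∗ δ(−h)` with `ν₁, λ₁` concentrated on `W` and `h ∈ W⊥`. -/
theorem decomposition_of_measure_concentrated_on_subspace
    {V : Type*} [NormedAddCommGroup V] [InnerProductSpace ℝ V]
    [FiniteDimensional ℝ V] [MeasurableSpace V] [BorelSpace V]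
    (W : Submodule ℝ V) (μ ν lam : Measure V)
    [IsProbabilityMeasure μ] [IsProbabilityMeasure ν] [IsProbabilityMeasure lam]
    (hconv : μ = ν ∗ lam) (hW : μ (W : Set V) = 1) :
    ∃ (ν₁ lam₁ : Measure V) (h : V), IsProbabilityMeasure ν₁ ∧ IsProbabilityMeasure lam₁ ∧
      ν₁ (W : Set V) = 1 ∧ lam₁ (W : Set V) = 1 ∧ h ∈ Wᗮ ∧
      ν = ν₁ ∗ Measure.dirac h ∧ lam = lam₁ ∗ Measure.dirac (-h) := by
  have hWclosed : IsClosed (W : Set V) := Submodule.closed_of_finiteDimensional W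
  have hWmeas : MeasurableSet (W : Set V) := hWclosed.measurableSet
  -- μ(W)=1 means (ν.prod lam){(x,y) : x+y ∈ W} = 1
  have hprod : (ν.prod lam) ((fun p : V × V => p.1 + p.2) ⁻¹' (W : Set V)) = 1 := by
    rw [← Measure.map_apply measurable_add hWmeas]
    show (ν ∗ lam) (W : Set V) = 1
    rw [← hconv]; exact hW
  have hae : ∀ᵐ p ∂(ν.prod lam), p.1 + p.2 ∈ W := by
    rw [ae_iff]
    have : {p : V × V | ¬ p.1 + p.2 ∈ W} =
        ((fun p : V × V => p.1 + p.2) ⁻¹' (W : Set V))ᶜ := rfl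
    rw [this, measure_compl (hWmeas.preimage (by fun_prop)) (measure_ne_top _ _), hprod]
    simp
  have haeae : ∀ᵐ x ∂ν, ∀ᵐ y ∂lam, x + y ∈ W := Measure.ae_ae_of_ae_prod hae
  -- pick x₀ with lam-a.e. y, x₀ + y ∈ W
  obtain ⟨x₀, hx₀⟩ := haeae.exists
  -- ν-a.e. x, x - x₀ ∈ W
  have hν_ae : ∀ᵐ x ∂ν, x - x₀ ∈ W := by
    filter_upwards [haeae] with x hx
    have hboth : ∀ᵐ y ∂lam, x + y ∈ W ∧ x₀ + y ∈ W := hx.and hx₀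
    obtain ⟨y, hy1, hy2⟩ := hboth.exists
    have : (x + y) - (x₀ + y) ∈ W := W.sub_mem hy1 hy2
    simpa using this
  -- decompose x₀ = w + h, w ∈ W, h ∈ W⊥
  set h : V := x₀ - (W.starProjection x₀ : V) with hh_def
  have hhW : h ∈ Wᗮ := W.sub_starProjection_mem_orthogonal x₀
  have hx₀h : x₀ - h ∈ W := by
    simp [hh_def]
  refine ⟨ν.map (· + (-h)), lam.map (· + h), h, ?_, ?_, ?_, ?_, hhW, ?_, ?_⟩
  · exact Measure.isProbabilityMeasure_map (by fun_prop)
  · exact Measure.isProbabilityMeasure_map (by fun_prop)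
  · rw [Measure.map_apply (by fun_prop) hWmeas]
    rw [← prob_compl_eq_zero_iff (hWmeas.preimage (by fun_prop))]
    refine mem_ae_iff.mp ?_
    filter_upwards [hν_ae] with x hx
    have : (x - x₀) + (x₀ - h) ∈ W := W.add_mem hx hx₀h
    have heq : (x - x₀) + (x₀ - h) = x + -h := by abel
    rw [heq] at this
    exact this
  · rw [Measure.map_apply (by fun_prop) hWmeas]
    rw [← prob_compl_eq_zero_iff (hWmeas.preimage (by fun_prop))]
    refine mem_ae_iff.mp ?_
    filter_upwards [hx₀] with y hy
    have : (x₀ + y) - (x₀ - h) ∈ W := W.sub_mem hy hx₀h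
    have heq : (x₀ + y) - (x₀ - h) = y + h := by abel
    rw [heq] at this
    exact this
  · rw [conv_dirac_eq_map _ h, Measure.map_map (by fun_prop) (by fun_prop)]
    have : ((· + h) ∘ (· + (-h))) = id := by funext x; simp
    rw [this, Measure.map_id]
  · rw [conv_dirac_eq_map _ (-h), Measure.map_map (by fun_prop) (by fun_prop)]
    have : ((· + (-h)) ∘ (· + h)) = id := by funext x; simp
    rw [this, Measure.map_id]
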